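/- arXiv:2308.04646 — 4 statements merged into one kernel-verified Lean document; each statement's English description precedes it below -/
import Mathlib

section
/- Let n > 5f and consider a multiset W of n − f values (received messages, at most f of which are from faulty processes). If, after removing the f smallest and f largest elements of W, all remaining n − 3f elements equal v, then: (a) at least n − 4f correct senders have input v; (b) at least n − 3f correct senders have input at most v; and (c) at least n − 3f correct senders have input at least v. In particular, since n > 5f, at least one correct sender has input v. -/
/-- Trimming lemma for the `n > 5f` malicious-failure algorithm.
`W` is the multiset of the `n - f` received values; `F ≤ W` are the (at most
`f`) values from faulty senders, so `W - F` are the values from correct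
senders (equal to their inputs).  If removing the `f` smallest elements `L`
and the `f` largest elements `H` of `W` leaves a middle part `M` all of whose
elements equal `v`, then: (a) at least `n - 4f` correct senders have input
`v`; (b) at least `n - 3f` correct senders have input at most `v`; (c) at
least `n - 3f` correct senders have input at least `v`; and in particular
some correct sender has input `v`. -/
theorem trimmed_values_lemma (n f : ℕ) (hn : 5 * f < n)
    (V : Type) [LinearOrder V]
    (W F : Multiset V) (hW : W.card = n - f)
    (hFW : F ≤ W) (hF : F.card ≤ f)
    (v : V) (L M H : Multiset V)
    (hsplit : W = L + M + H) (hL : L.card = f) (hH : H.card = f)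
    (hLsmall : ∀ x ∈ L, ∀ y ∈ M + H, x ≤ y)
    (hHlarge : ∀ x ∈ H, ∀ y ∈ L + M, y ≤ x)
    (hM : ∀ x ∈ M, x = v) :
    n - 4 * f ≤ (W - F).count v ∧
    n - 3 * f ≤ ((W - F).filter (fun x => x ≤ v)).card ∧
    n - 3 * f ≤ ((W - F).filter (fun x => v ≤ x)).card ∧
    v ∈ W - F := by
  have hcard : L.card + M.card + H.card = n - f := by
    rw [← Multiset.card_add, ← Multiset.card_add, ← hsplit, hW]
  have hm : M.card = n - 3 * f := by omega
  have hMne : M ≠ 0 := by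
    intro h
    rw [h, Multiset.card_zero] at hm
    omega
  obtain ⟨y, hy⟩ := Multiset.exists_mem_of_ne_zero hMne
  have hyv : y = v := hM y hy
  have hWF : W - F + F = W := tsub_add_cancel_of_le hFW
  -- (a)
  have hcount_M : M.count v = M.card :=
    Multiset.count_eq_card.mpr (fun x hx => (hM x hx).symm)
  have hcount_W : n - 3 * f ≤ W.count v := by
    rw [hsplit, Multiset.count_add, Multiset.count_add, hcount_M, hm]
    omega
  have hcountF : F.count v ≤ f := le_trans (Multiset.count_le_card v F) hF
  have hsplitc : (W - F).count v + F.count v = W.count v := by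
    rw [← Multiset.count_add, hWF]
  have ha : n - 4 * f ≤ (W - F).count v := by omega
  have hfilt : ∀ (p : V → Prop) [DecidablePred p],
      (W - F).filter p + F.filter p = W.filter p := by
    intro p _
    rw [← Multiset.filter_add, hWF]
  refine ⟨ha, ?_, ?_, ?_⟩
  · have hLle : ∀ x ∈ L, x ≤ v := fun x hx =>
      hyv ▸ hLsmall x hx y (Multiset.mem_add.mpr (Or.inl hy))
    have hfW : n - 2 * f ≤ (W.filter (fun x => x ≤ v)).card := by
      rw [hsplit, Multiset.filter_add, Multiset.filter_add,
        Multiset.filter_eq_self.mpr hLle,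
        Multiset.filter_eq_self.mpr (fun x hx => le_of_eq (hM x hx))]
      simp only [Multiset.card_add, hL, hm]
      omega
    have := congrArg Multiset.card (hfilt (fun x => x ≤ v))
    simp only [Multiset.card_add] at this
    have hFf : (F.filter (fun x => x ≤ v)).card ≤ f :=
      le_trans (Multiset.card_le_card (Multiset.filter_le _ _)) hF
    omega
  · have hHge : ∀ x ∈ H, v ≤ x := fun x hx =>
      hyv ▸ hHlarge x hx y (Multiset.mem_add.mpr (Or.inr hy))
    have hfW : n - 2 * f ≤ (W.filter (fun x => v ≤ x)).card := by
      rw [hsplit, Multiset.filter_add, Multiset.filter_add,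
        Multiset.filter_eq_self.mpr hHge,
        Multiset.filter_eq_self.mpr (fun x hx => ge_of_eq (hM x hx))]
      simp only [Multiset.card_add, hm, hH]
      omega
    have := congrArg Multiset.card (hfilt (fun x => v ≤ x))
    simp only [Multiset.card_add] at this
    have hFf : (F.filter (fun x => v ≤ x)).card ≤ f :=
      le_trans (Multiset.card_le_card (Multiset.filter_le _ _)) hF
    omega
  · have : 0 < (W - F).count v := by omega
    exact Multiset.count_pos.mp this
end

section
/- Suppose a correct process receives a multiset of messages in which, for some mode value m with count x, the messages for values other than m number at least x + f + 1, and at most f messages are from faulty processes. Then the messages from correct processes for values other than m number at least x + 1, and hence cannot all be for a single value (since no value occurs more than x times). Consequently, at least two distinct values appear among the correct senders' inputs. -/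
/-- Validity of ⊥-echoes: `M` is the multiset of received message values,
`F ≤ M` are those (at most `f`) from faulty senders, `m` is a mode of `M`
occurring `x = M.count m` times.  If the messages for values other than `m`
number at least `x + f + 1`, then the messages from correct senders for
values other than `m` number at least `x + 1`, they cannot all be for a
single value, and hence at least two distinct values appear among the
correct senders' inputs. -/
theorem bot_echo_validity (f : ℕ)
    (V : Type) [DecidableEq V] (M F : Multiset V) (m : V)
    (hFM : F ≤ M) (hFcard : F.card ≤ f)
    (hmany : M.count m + f + 1 ≤ (M.filter (fun y => y ≠ m)).card)
    (hmode : ∀ w : V, M.count w ≤ M.count m) :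
    M.count m + 1 ≤ ((M - F).filter (fun y => y ≠ m)).card ∧
    (¬ ∃ w : V, ∀ y ∈ (M - F).filter (fun y => y ≠ m), y = w) ∧
    (∃ a ∈ M - F, ∃ b ∈ M - F, a ≠ b) := by
  set S := (M - F).filter (fun y => y ≠ m) with hS
  have hsub : S = M.filter (fun y => y ≠ m) - F.filter (fun y => y ≠ m) := by
    rw [hS, Multiset.filter_sub]
  have hle : F.filter (fun y => y ≠ m) ≤ M.filter (fun y => y ≠ m) :=
    Multiset.filter_le_filter _ hFM
  have hcard1 : (F.filter (fun y => y ≠ m)).card ≤ F.card :=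
    Multiset.card_le_card (Multiset.filter_le _ _)
  have hcardS : S.card = (M.filter (fun y => y ≠ m)).card -
      (F.filter (fun y => y ≠ m)).card := by
    rw [hsub, Multiset.card_sub hle]
  have h1 : M.count m + 1 ≤ S.card := by omega
  have hSM : S ≤ M := le_trans (Multiset.filter_le _ _) (Multiset.sub_le_self _ _)
  have h2 : ¬ ∃ w : V, ∀ y ∈ S, y = w := by
    rintro ⟨w, hw⟩
    have hcw : S.count w = S.card := Multiset.count_eq_card.mpr (fun b hb => (hw b hb).symm)
    have : S.count w ≤ M.count w := Multiset.count_le_of_le _ hSM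
    have := hmode w
    omega
  refine ⟨h1, h2, ?_⟩
  have hne : S ≠ 0 := by
    intro h0
    rw [h0] at h1
    simp at h1
  obtain ⟨a, ha⟩ := Multiset.exists_mem_of_ne_zero hne
  have : ¬ ∀ y ∈ S, y = a := fun h => h2 ⟨a, h⟩
  push_neg at this
  obtain ⟨b, hb, hba⟩ := this
  exact ⟨a, (Multiset.mem_filter.mp ha).1, b, (Multiset.mem_filter.mp hb).1,
    fun h => hba (by rw [h])⟩
end

section
/- Let n > 3f. Suppose one correct process receives at least n − f ECHO5 messages for value v ∈ V, and another correct process receives at least n − f ECHO5 messages for ⊥, where each of the n − f correct processes sends at most one ECHO5 message and there are f faulty processes. Then n ≥ 2(n − 2f) + f, contradicting n > 3f. Hence if a correct process decides (v,2), no correct process decides (⊥,0). -/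
/-- Agreement for `R = 2` of the `n > 3f` algorithm: each correct process
sends at most one ECHO5 message (`msg i = some w` where `w : Option V`, with
inner `none` standing for `⊥`).  It is impossible for one correct process to
receive at least `n − f` ECHO5 messages for `v ∈ V` (at least `n − 2f` from
correct senders) while another receives at least `n − f` ECHO5 messages for
`⊥` (at least `n − 2f` from correct senders); hence if a correct process
decides `(v,2)`, no correct process decides `(⊥,0)`. -/
theorem echo5_no_v2_and_bot (n f : ℕ) (hn : 3 * f < n)
    (V : Type) (correct : Finset (Fin n)) (hcorrect : correct.card = n - f)
    (msg : Fin n → Option (Option V)) (v : V)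
    (S T : Finset (Fin n)) (hS : S ⊆ correct) (hT : T ⊆ correct)
    (hScard : n - 2 * f ≤ S.card) (hTcard : n - 2 * f ≤ T.card)
    (hSv : ∀ i ∈ S, msg i = some (some v))
    (hTbot : ∀ i ∈ T, msg i = some none) :
    False := by
  have hdisj : Disjoint S T := by
    rw [Finset.disjoint_left]
    intro i hiS hiT
    have := hSv i hiS
    have := hTbot i hiT
    simp_all
  have h1 : S.card + T.card ≤ correct.card :=
    hcorrect ▸ (hcorrect ▸ (Finset.card_union_of_disjoint hdisj ▸
      Finset.card_le_card (Finset.union_subset hS hT)))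
  rw [hcorrect] at h1
  omega
end

section
/- Let n ≤ 5f and suppose D : {0,…,n−f} → {0,1,⊥} is a function satisfying: D(z) = 0 for all z ≥ n − 2f; D(z) = 1 for all z ≤ f; and whenever D(x) = 0 and D(y) = 1, |x − y| > f. Let m = ⌈(n−f)/2⌉ and assume n ≥ 3f + 2. Then D(m) = ⊥, and moreover m + f ≥ n − 2f (so D(m + f) = 0) and m − f ≤ f (so D(m − f) = 1). -/
/-- No built-in binding for `n ≤ 5f`: let `D z` model the decision
(`some false` = 0, `some true` = 1, `none` = ⊥) of a uniform algorithm when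
`z` of the `n − f` received binary values are 0.  If `D` forces decision 0
for `z ≥ n − 2f`, forces decision 1 for `z ≤ f`, and any 0-deciding and
1-deciding counts differ by more than `f`, then at the balanced point
`m = ⌈(n − f)/2⌉` the decision is ⊥, while `m + f ≥ n − 2f` (so
`D (m + f) = 0`) and `m − f ≤ f` (so `D (m − f) = 1`). -/
theorem no_builtin_binding (n f : ℕ) (hlow : 3 * f + 2 ≤ n) (hhigh : n ≤ 5 * f)
    (D : ℕ → Option Bool)
    (h0 : ∀ z, n - 2 * f ≤ z → z ≤ n - f → D z = some false)
    (h1 : ∀ z, z ≤ f → D z = some true)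
    (hdiff : ∀ x y, x ≤ n - f → y ≤ n - f →
      D x = some false → D y = some true → (f : ℤ) < |(x : ℤ) - (y : ℤ)|) :
    D ((n - f) ⌈/⌉ 2) = none ∧
    n - 2 * f ≤ (n - f) ⌈/⌉ 2 + f ∧
    (n - f) ⌈/⌉ 2 - f ≤ f ∧
    D ((n - f) ⌈/⌉ 2 + f) = some false ∧
    D ((n - f) ⌈/⌉ 2 - f) = some true := by
  have hm' : (n - f) ⌈/⌉ 2 = (n - f + 1) / 2 := by
    rw [Nat.ceilDiv_eq_add_pred_div]; omega
  set m := (n - f) ⌈/⌉ 2 with hmdef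
  have hDm : D m = none := by
    cases hDmv : D m with
    | none => rfl
    | some b =>
      cases b with
      | false =>
        have := hdiff m f (by omega) (by omega) hDmv (h1 f le_rfl)
        rw [lt_abs] at this
        omega
      | true =>
        have := hdiff (n - 2 * f) m (by omega) (by omega)
          (h0 _ le_rfl (by omega)) hDmv
        rw [lt_abs] at this
        omega
  refine ⟨hDm, by omega, by omega, h0 _ (by omega) (by omega), h1 _ (by omega)⟩
end
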